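/- Let G=(V,E,W) be a finite graph, m_ij ≥ 0 time-independent reals for edges (i,j)∈E, and m_ii real numbers. Let (ρ(t),S(t)) be a C¹ solution with ρ_i(t) > 0 of the SBP Hamiltonian system: Ṡ_i = −m_ii − (1/2) Σ_{j∈N(i)} e^{S_j−S_i} m_ij √(ρ_j/ρ_i) − (1/2) Σ_{j∈N(i)} e^{S_i−S_j} m_ji √(ρ_j/ρ_i), and ρ̇_i = Σ_{j∈N(i)} e^{S_i−S_j} m_ji √(ρ_i ρ_j) − Σ_{j∈N(i)} e^{S_j−S_i} m_ij √(ρ_i ρ_j). Then the quantity Σ_{i∈V} Σ_{j∈N(i)} e^{S_j(t)−S_i(t)} m_ij √(ρ_i(t) ρ_j(t)) + Σ_{i∈V} m_ii ρ_i(t) is constant in t. -/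

import Mathlib

private theorem nbr_swap {N : ℕ} (G : SimpleGraph (Fin N)) [DecidableRel G.Adj]
    (f : Fin N → Fin N → ℝ) :
    ∑ i, ∑ j ∈ G.neighborFinset i, f i j = ∑ i, ∑ j ∈ G.neighborFinset i, f j i := by
  have h : ∀ g : Fin N → Fin N → ℝ,
      (∑ i, ∑ j ∈ G.neighborFinset i, g i j) = ∑ i, ∑ j, if G.Adj i j then g i j else 0 := by
    intro g
    refine Finset.sum_congr rfl fun i _ => ?_
    rw [SimpleGraph.neighborFinset_eq_filter, Finset.sum_filter]
  rw [h, h, Finset.sum_comm]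
  refine Finset.sum_congr rfl fun i _ => Finset.sum_congr rfl fun j _ => ?_
  exact if_congr (G.adj_comm j i) rfl rfl

private theorem sqrt_term (e M q p x y : ℝ) (hx : 0 < x) (hy : 0 < y) :
    e * M * ((q * y + x * p) / (2 * Real.sqrt (x * y))) =
      e * M * Real.sqrt (x * y) * (q / (2 * x) + p / (2 * y)) := by
  have hxy : (0:ℝ) < x * y := mul_pos hx hy
  have hs : 0 < Real.sqrt (x*y) := Real.sqrt_pos.mpr hxy
  field_simp
  ring_nf
  rw [show y * x = x * y by ring, Real.sq_sqrt hxy.le]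
  ring

private theorem sqrt_div_pos (x y : ℝ) (hx : 0 < x) (hy : 0 < y) :
    Real.sqrt (y / x) = Real.sqrt (x * y) / x := by
  have hsx : 0 < Real.sqrt x := Real.sqrt_pos.mpr hx
  have h : Real.sqrt x * Real.sqrt x = x := Real.mul_self_sqrt hx.le
  rw [Real.sqrt_div hy.le, Real.sqrt_mul hx.le]
  field_simp
  linear_combination (-1) * h

noncomputable def aFun {N : ℕ} (m : Fin N → Fin N → ℝ) (r σ : Fin N → ℝ) (i j : Fin N) : ℝ :=
  Real.exp (σ j - σ i) * m i j * Real.sqrt (r i * r j)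

noncomputable def PdF {N : ℕ} (G : SimpleGraph (Fin N)) [DecidableRel G.Adj]
    (m : Fin N → Fin N → ℝ) (r σ : Fin N → ℝ) (i : Fin N) : ℝ :=
  - m i i
    - (1/2) * ∑ j ∈ G.neighborFinset i,
        Real.exp (σ j - σ i) * m i j * Real.sqrt (r j / r i)
    - (1/2) * ∑ j ∈ G.neighborFinset i,
        Real.exp (σ i - σ j) * m j i * Real.sqrt (r j / r i)

noncomputable def QdF {N : ℕ} (G : SimpleGraph (Fin N)) [DecidableRel G.Adj]
    (m : Fin N → Fin N → ℝ) (r σ : Fin N → ℝ) (i : Fin N) : ℝ :=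
  (∑ j ∈ G.neighborFinset i, Real.exp (σ i - σ j) * m j i * Real.sqrt (r i * r j))
    - ∑ j ∈ G.neighborFinset i, Real.exp (σ j - σ i) * m i j * Real.sqrt (r i * r j)

private theorem hPd_eq {N : ℕ} (G : SimpleGraph (Fin N)) [DecidableRel G.Adj]
    (m : Fin N → Fin N → ℝ) (r σ : Fin N → ℝ) (hr : ∀ i, 0 < r i) (i : Fin N) :
    PdF G m r σ i = - m i i
      - (∑ j ∈ G.neighborFinset i, aFun m r σ i j) / (2 * r i)
      - (∑ j ∈ G.neighborFinset i, aFun m r σ j i) / (2 * r i) := by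
  have e1 : ∀ j, Real.exp (σ j - σ i) * m i j * Real.sqrt (r j / r i)
      = aFun m r σ i j / r i := by
    intro j
    unfold aFun
    rw [sqrt_div_pos _ _ (hr i) (hr j)]
    ring
  have e2 : ∀ j, Real.exp (σ i - σ j) * m j i * Real.sqrt (r j / r i)
      = aFun m r σ j i / r i := by
    intro j
    unfold aFun
    rw [sqrt_div_pos _ _ (hr i) (hr j), mul_comm (r j) (r i)]
    ring
  unfold PdF
  rw [Finset.sum_congr rfl (fun j _ => e1 j), Finset.sum_congr rfl (fun j _ => e2 j),
      ← Finset.sum_div, ← Finset.sum_div]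
  ring

private theorem hQd_eq {N : ℕ} (G : SimpleGraph (Fin N)) [DecidableRel G.Adj]
    (m : Fin N → Fin N → ℝ) (r σ : Fin N → ℝ) (i : Fin N) :
    QdF G m r σ i = (∑ j ∈ G.neighborFinset i, aFun m r σ j i)
      - ∑ j ∈ G.neighborFinset i, aFun m r σ i j := by
  unfold QdF aFun
  congr 1
  refine Finset.sum_congr rfl fun j _ => ?_
  rw [mul_comm (r j) (r i)]

private theorem algebra_zero {N : ℕ} (G : SimpleGraph (Fin N)) [DecidableRel G.Adj]
    (r : Fin N → ℝ) (hr : ∀ i, 0 < r i)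
    (a : Fin N → Fin N → ℝ) (mm : Fin N → ℝ) (Pd Qd : Fin N → ℝ)
    (hPd : ∀ i, Pd i = - mm i
        - (∑ j ∈ G.neighborFinset i, a i j) / (2 * r i)
        - (∑ j ∈ G.neighborFinset i, a j i) / (2 * r i))
    (hQd : ∀ i, Qd i = (∑ j ∈ G.neighborFinset i, a j i)
        - ∑ j ∈ G.neighborFinset i, a i j) :
    (∑ i, ∑ j ∈ G.neighborFinset i,
        (a i j * (Pd j - Pd i) + a i j * (Qd i / (2 * r i) + Qd j / (2 * r j))))
      + ∑ i, mm i * Qd i = 0 := by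
  set A : Fin N → ℝ := fun i => ∑ j ∈ G.neighborFinset i, a i j with hA
  set B : Fin N → ℝ := fun i => ∑ j ∈ G.neighborFinset i, a j i with hB
  have hc : ∀ i j, a i j * (Pd j - Pd i) + a i j * (Qd i / (2 * r i) + Qd j / (2 * r j))
      = a i j * mm i - a i j * mm j + a i j * (B i / r i) - a i j * (A j / r j) := by
    intro i j
    rw [hPd i, hPd j, hQd i, hQd j]
    have hi := (hr i).ne'
    have hj := (hr j).ne'
    show a i j * ((- mm j - A j / (2 * r j) - B j / (2 * r j))
        - (- mm i - A i / (2 * r i) - B i / (2 * r i)))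
      + a i j * ((B i - A i) / (2 * r i) + (B j - A j) / (2 * r j))
      = a i j * mm i - a i j * mm j + a i j * (B i / r i) - a i j * (A j / r j)
    field_simp
    ring
  rw [Finset.sum_congr rfl fun i _ => Finset.sum_congr rfl fun j _ => hc i j]
  have s1 : ∑ i, ∑ j ∈ G.neighborFinset i, a i j * mm i = ∑ i, A i * mm i :=
    Finset.sum_congr rfl fun i _ => (Finset.sum_mul _ _ _).symm
  have s2 : ∑ i, ∑ j ∈ G.neighborFinset i, a i j * mm j = ∑ i, B i * mm i := by
    rw [nbr_swap]
    exact Finset.sum_congr rfl fun i _ => (Finset.sum_mul _ _ _).symm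
  have s3 : ∑ i, ∑ j ∈ G.neighborFinset i, a i j * (B i / r i) = ∑ i, A i * (B i / r i) :=
    Finset.sum_congr rfl fun i _ => (Finset.sum_mul _ _ _).symm
  have s4 : ∑ i, ∑ j ∈ G.neighborFinset i, a i j * (A j / r j) = ∑ i, B i * (A i / r i) := by
    rw [nbr_swap]
    exact Finset.sum_congr rfl fun i _ => (Finset.sum_mul _ _ _).symm
  have s5 : ∑ i, mm i * Qd i = ∑ i, mm i * (B i - A i) :=
    Finset.sum_congr rfl fun i _ => by rw [hQd i]
  simp only [Finset.sum_sub_distrib, Finset.sum_add_distrib]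
  rw [s1, s2, s3, s4, s5]
  rw [← Finset.sum_sub_distrib, ← Finset.sum_add_distrib, ← Finset.sum_sub_distrib,
      ← Finset.sum_add_distrib]
  exact Finset.sum_eq_zero fun i _ => by ring

private theorem main_zero {N : ℕ} (G : SimpleGraph (Fin N)) [DecidableRel G.Adj]
    (m : Fin N → Fin N → ℝ) (r σ : Fin N → ℝ) (hr : ∀ i, 0 < r i) :
    (∑ i, ∑ j ∈ G.neighborFinset i,
        (Real.exp (σ j - σ i) * (PdF G m r σ j - PdF G m r σ i) * m i j * Real.sqrt (r i * r j)
          + Real.exp (σ j - σ i) * m i j *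
            ((QdF G m r σ i * r j + r i * QdF G m r σ j) / (2 * Real.sqrt (r i * r j)))))
      + ∑ i, m i i * QdF G m r σ i = 0 := by
  have hd : ∀ i j,
      Real.exp (σ j - σ i) * (PdF G m r σ j - PdF G m r σ i) * m i j * Real.sqrt (r i * r j)
        + Real.exp (σ j - σ i) * m i j *
          ((QdF G m r σ i * r j + r i * QdF G m r σ j) / (2 * Real.sqrt (r i * r j)))
      = aFun m r σ i j * (PdF G m r σ j - PdF G m r σ i)
        + aFun m r σ i j * (QdF G m r σ i / (2 * r i) + QdF G m r σ j / (2 * r j)) := by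
    intro i j
    rw [sqrt_term (Real.exp (σ j - σ i)) (m i j) (QdF G m r σ i) (QdF G m r σ j)
        (r i) (r j) (hr i) (hr j)]
    unfold aFun
    ring
  rw [Finset.sum_congr rfl fun i _ => Finset.sum_congr rfl fun j _ => hd i j]
  exact algebra_zero G r hr (aFun m r σ) (fun i => m i i) (PdF G m r σ) (QdF G m r σ)
    (hPd_eq G m r σ hr) (hQd_eq G m r σ)

/-- Along any C¹ positive solution of the SBP Hamiltonian system on a finite
graph with time-independent rates `m_ij ≥ 0` (edges) and diagonal entries `m_ii ∈ ℝ`, the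
Hamiltonian `Σ_i Σ_{j∈N(i)} e^{S_j−S_i} m_ij √(ρ_i ρ_j) + Σ_i m_ii ρ_i` is constant in time. -/
theorem sbp_hamiltonian_conservation {N : ℕ}
    (G : SimpleGraph (Fin N)) [DecidableRel G.Adj]
    (m : Fin N → Fin N → ℝ)
    (hm_nonneg : ∀ i j, G.Adj i j → 0 ≤ m i j)
    (ρ S : ℝ → Fin N → ℝ)
    (hρ_pos : ∀ t i, 0 < ρ t i)
    (hS : ∀ t i, HasDerivAt (fun τ => S τ i)
        (- m i i
          - (1/2) * ∑ j ∈ G.neighborFinset i,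
              Real.exp (S t j - S t i) * m i j * Real.sqrt (ρ t j / ρ t i)
          - (1/2) * ∑ j ∈ G.neighborFinset i,
              Real.exp (S t i - S t j) * m j i * Real.sqrt (ρ t j / ρ t i)) t)
    (hρ : ∀ t i, HasDerivAt (fun τ => ρ τ i)
        ((∑ j ∈ G.neighborFinset i,
            Real.exp (S t i - S t j) * m j i * Real.sqrt (ρ t i * ρ t j))
         - ∑ j ∈ G.neighborFinset i,
            Real.exp (S t j - S t i) * m i j * Real.sqrt (ρ t i * ρ t j)) t) :
    ∀ s t : ℝ,
      (∑ i, ∑ j ∈ G.neighborFinset i,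
          Real.exp (S s j - S s i) * m i j * Real.sqrt (ρ s i * ρ s j))
        + ∑ i, m i i * ρ s i
      = (∑ i, ∑ j ∈ G.neighborFinset i,
          Real.exp (S t j - S t i) * m i j * Real.sqrt (ρ t i * ρ t j))
        + ∑ i, m i i * ρ t i := by
  suffices h : ∀ u : ℝ, HasDerivAt (fun τ =>
      (∑ i, ∑ j ∈ G.neighborFinset i,
          Real.exp (S τ j - S τ i) * m i j * Real.sqrt (ρ τ i * ρ τ j))
        + ∑ i, m i i * ρ τ i) (0:ℝ) u by
    intro s t
    exact is_const_of_deriv_eq_zero (fun u => (h u).differentiableAt)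
      (fun u => (h u).deriv) s t
  intro u
  have hS' : ∀ i, HasDerivAt (fun τ => S τ i) (PdF G m (ρ u) (S u) i) u := fun i => hS u i
  have hρ' : ∀ i, HasDerivAt (fun τ => ρ τ i) (QdF G m (ρ u) (S u) i) u := fun i => hρ u i
  have hterm : ∀ i j, HasDerivAt
      (fun τ => Real.exp (S τ j - S τ i) * m i j * Real.sqrt (ρ τ i * ρ τ j))
      (Real.exp (S u j - S u i) * (PdF G m (ρ u) (S u) j - PdF G m (ρ u) (S u) i) * m i j
          * Real.sqrt (ρ u i * ρ u j)
        + Real.exp (S u j - S u i) * m i j *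
          ((QdF G m (ρ u) (S u) i * ρ u j + ρ u i * QdF G m (ρ u) (S u) j)
            / (2 * Real.sqrt (ρ u i * ρ u j)))) u := by
    intro i j
    have h1 : HasDerivAt (fun τ => Real.exp (S τ j - S τ i))
        (Real.exp (S u j - S u i) * (PdF G m (ρ u) (S u) j - PdF G m (ρ u) (S u) i)) u :=
      ((hS' j).sub (hS' i)).exp
    have h2 : HasDerivAt (fun τ => ρ τ i * ρ τ j)
        (QdF G m (ρ u) (S u) i * ρ u j + ρ u i * QdF G m (ρ u) (S u) j) u :=
      (hρ' i).mul (hρ' j)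
    have h3 := h2.sqrt (ne_of_gt (mul_pos (hρ_pos u i) (hρ_pos u j)))
    exact (h1.mul_const (m i j)).mul h3
  have htotal : HasDerivAt (fun τ =>
      (∑ i, ∑ j ∈ G.neighborFinset i,
          Real.exp (S τ j - S τ i) * m i j * Real.sqrt (ρ τ i * ρ τ j))
        + ∑ i, m i i * ρ τ i)
      ((∑ i, ∑ j ∈ G.neighborFinset i,
          (Real.exp (S u j - S u i) * (PdF G m (ρ u) (S u) j - PdF G m (ρ u) (S u) i) * m i j
              * Real.sqrt (ρ u i * ρ u j)
            + Real.exp (S u j - S u i) * m i j *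
              ((QdF G m (ρ u) (S u) i * ρ u j + ρ u i * QdF G m (ρ u) (S u) j)
                / (2 * Real.sqrt (ρ u i * ρ u j)))))
        + ∑ i, m i i * QdF G m (ρ u) (S u) i) u :=
    (HasDerivAt.fun_sum fun i _ => HasDerivAt.fun_sum fun j _ => hterm i j).add
      (HasDerivAt.fun_sum fun i _ => (hρ' i).const_mul (m i i))
  have hzero := main_zero G m (ρ u) (S u) (hρ_pos u)
  exact hzero ▸ htotal
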